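/- Under the hypotheses of the Lyapunov derivative lemma with Q positive definite, the function V(t) = ⟨x̃(t), P x̃(t)⟩ + (1/μ)‖f̃(t)‖²_H is nonincreasing, and ∫_{t₀}^{∞} ⟨x̃(τ), Q x̃(τ)⟩ dτ ≤ V(t₀) < ∞; in particular x̃ ∈ L²([t₀,∞), ℝ^d). -/

import Mathlib

open RealInnerProductSpace MeasureTheory

/-- under the Lyapunov-derivative hypotheses with `Q` positive
definite, `V` is nonincreasing and `∫_{t₀}^∞ ⟨x̃, Q x̃⟩ ≤ V(t₀) < ∞`; in
particular `x̃ ∈ L²([t₀,∞), ℝ^d)`. -/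
theorem lyapunov_nonincreasing_and_L2 {d : ℕ} {H : Type*} [NormedAddCommGroup H]
    [InnerProductSpace ℝ H] [CompleteSpace H]
    (A P Q : EuclideanSpace ℝ (Fin d) →L[ℝ] EuclideanSpace ℝ (Fin d))
    (B : EuclideanSpace ℝ (Fin d))
    (hPsym : ∀ v w : EuclideanSpace ℝ (Fin d), ⟪P v, w⟫ = ⟪v, P w⟫)
    (hPpos : ∀ v : EuclideanSpace ℝ (Fin d), v ≠ 0 → 0 < ⟪v, P v⟫)
    (hQsym : ∀ v w : EuclideanSpace ℝ (Fin d), ⟪Q v, w⟫ = ⟪v, Q w⟫)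
    (hQpos : ∀ v : EuclideanSpace ℝ (Fin d), v ≠ 0 → 0 < ⟪v, Q v⟫)
    (hLyap : ∀ v w : EuclideanSpace ℝ (Fin d),
      ⟪A v, P w⟫ + ⟪v, P (A w)⟫ = -⟪v, Q w⟫)
    (μ : ℝ) (hμ : 0 < μ)
    (ev : ℝ → H →L[ℝ] ℝ)
    (xe : ℝ → EuclideanSpace ℝ (Fin d)) (fe : ℝ → H)
    (hxe : ∀ t : ℝ, HasDerivAt xe (A (xe t) + (ev t (fe t)) • B) t)
    (hfe : ∀ t : ℝ, HasDerivAt fe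
      (-(μ • (ContinuousLinearMap.adjoint ((ev t).smulRight B)) (P (xe t)))) t)
    (t₀ : ℝ) :
    (AntitoneOn (fun t => ⟪xe t, P (xe t)⟫ + (1 / μ) * ‖fe t‖ ^ 2) (Set.Ici t₀)) ∧
      IntegrableOn (fun τ => ⟪xe τ, Q (xe τ)⟫) (Set.Ici t₀) ∧
      (∫ τ in Set.Ici t₀, ⟪xe τ, Q (xe τ)⟫) ≤
        ⟪xe t₀, P (xe t₀)⟫ + (1 / μ) * ‖fe t₀‖ ^ 2 ∧
      IntegrableOn (fun τ => ‖xe τ‖ ^ 2) (Set.Ici t₀) := by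
  set V : ℝ → ℝ := fun t => ⟪xe t, P (xe t)⟫ + (1 / μ) * ‖fe t‖ ^ 2 with hVdef
  set g : ℝ → ℝ := fun τ => ⟪xe τ, Q (xe τ)⟫ with hgdef
  have hQnonneg : ∀ v : EuclideanSpace ℝ (Fin d), 0 ≤ ⟪v, Q v⟫ := by
    intro v
    rcases eq_or_ne v 0 with rfl | hv
    · simp
    · exact (hQpos v hv).le
  have hPnonneg : ∀ v : EuclideanSpace ℝ (Fin d), 0 ≤ ⟪v, P v⟫ := by
    intro v
    rcases eq_or_ne v 0 with rfl | hv
    · simp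
    · exact (hPpos v hv).le
  -- derivative of V
  have hV : ∀ t, HasDerivAt V (-g t) t := by
    intro t
    have hx := hxe t
    have hf := hfe t
    have hPx : HasDerivAt (fun t => P (xe t))
        (P (A (xe t) + (ev t (fe t)) • B)) t :=
      P.hasFDerivAt.comp_hasDerivAt t hx
    have h1 : HasDerivAt (fun t => ⟪xe t, P (xe t)⟫)
        (⟪xe t, P (A (xe t) + (ev t (fe t)) • B)⟫ +
          ⟪A (xe t) + (ev t (fe t)) • B, P (xe t)⟫) t :=
      hx.inner ℝ hPx
    have h2 : HasDerivAt (fun t => ‖fe t‖ ^ 2)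
        (⟪fe t, -(μ • (ContinuousLinearMap.adjoint ((ev t).smulRight B)) (P (xe t)))⟫ +
          ⟪-(μ • (ContinuousLinearMap.adjoint ((ev t).smulRight B)) (P (xe t))), fe t⟫) t := by
      have := hf.inner ℝ hf
      simp only [real_inner_self_eq_norm_sq] at this
      exact this
    have hsum := h1.add (h2.const_mul (1 / μ))
    convert hsum using 1
    case e'_4 => rfl
    case e'_5 => rfl
    case e'_8 => rfl
    have hadj : ⟪fe t, (ContinuousLinearMap.adjoint ((ev t).smulRight B)) (P (xe t))⟫
        = (ev t (fe t)) * ⟪B, P (xe t)⟫ := by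
      rw [ContinuousLinearMap.adjoint_inner_right, ContinuousLinearMap.smulRight_apply,
        real_inner_smul_left]
    have hLx := hLyap (xe t) (xe t)
    have hsymm : ⟪xe t, P B⟫ = ⟪B, P (xe t)⟫ := by
      rw [← hPsym, real_inner_comm]
    have e1 : ⟪xe t, P (A (xe t) + (ev t (fe t)) • B)⟫
        = ⟪xe t, P (A (xe t))⟫ + (ev t (fe t)) * ⟪B, P (xe t)⟫ := by
      rw [map_add, inner_add_right, _root_.map_smul, real_inner_smul_right, hsymm]
    have e2 : ⟪A (xe t) + (ev t (fe t)) • B, P (xe t)⟫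
        = ⟪A (xe t), P (xe t)⟫ + (ev t (fe t)) * ⟪B, P (xe t)⟫ := by
      rw [inner_add_left, real_inner_smul_left]
    have e3 : ⟪fe t, -(μ • (ContinuousLinearMap.adjoint ((ev t).smulRight B)) (P (xe t)))⟫
        = -(μ * ((ev t (fe t)) * ⟪B, P (xe t)⟫)) := by
      rw [inner_neg_right, real_inner_smul_right, hadj]
    have e4 : ⟪-(μ • (ContinuousLinearMap.adjoint ((ev t).smulRight B)) (P (xe t))), fe t⟫
        = -(μ * ((ev t (fe t)) * ⟪B, P (xe t)⟫)) := by
      rw [real_inner_comm]; exact e3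
    have e5 : 1 / μ * (-(μ * ((ev t (fe t)) * ⟪B, P (xe t)⟫)) +
        -(μ * ((ev t (fe t)) * ⟪B, P (xe t)⟫)))
        = -(2 * ((ev t (fe t)) * ⟪B, P (xe t)⟫)) := by
      field_simp
      ring
    rw [e1, e2, e3, e4, e5]
    show -⟪xe t, Q (xe t)⟫ = _
    linarith [hLx]
  have hVdiff : Differentiable ℝ V := fun t => (hV t).differentiableAt
  have hxeC : Continuous xe := by
    have hd : Differentiable ℝ xe := fun t => (hxe t).differentiableAt
    exact hd.continuous
  have hgC : Continuous g := hxeC.inner (Q.continuous.comp hxeC)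
  have hgnn : ∀ τ, 0 ≤ g τ := fun τ => hQnonneg (xe τ)
  have hVnn : ∀ τ, 0 ≤ V τ := by
    intro τ
    have : 0 ≤ (1 / μ) * ‖fe τ‖ ^ 2 := by positivity
    exact add_nonneg (hPnonneg (xe τ)) this
  -- part 1 : antitone
  have hanti : AntitoneOn V (Set.Ici t₀) := by
    apply antitoneOn_of_deriv_nonpos (convex_Ici t₀) hVdiff.continuous.continuousOn
      (hVdiff.differentiableOn)
    intro x _
    rw [(hV x).deriv]
    simpa using hgnn x
  -- FTC on finite intervals
  have hFTC : ∀ T, t₀ ≤ T → (∫ τ in t₀..T, g τ) = V t₀ - V T := by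
    intro T hT
    have : (∫ τ in t₀..T, -g τ) = V T - V t₀ := by
      apply intervalIntegral.integral_eq_sub_of_hasDerivAt
      · intro x _
        exact hV x
      · exact (hgC.neg.intervalIntegrable t₀ T)
    rw [intervalIntegral.integral_neg] at this
    linarith
  have hbound : ∀ T, t₀ ≤ T → (∫ τ in t₀..T, g τ) ≤ V t₀ := by
    intro T hT
    rw [hFTC T hT]
    linarith [hVnn T]
  -- integrability on Ioi
  have hIoi : IntegrableOn g (Set.Ioi t₀) := by
    apply integrableOn_Ioi_of_intervalIntegral_norm_bounded (V t₀) t₀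
      (fun T : ℝ => (hgC.integrableOn_Ioc (a := t₀) (b := T))) Filter.tendsto_id
    filter_upwards [Filter.eventually_ge_atTop t₀] with T hT
    have : (fun x => ‖g x‖) = g := by
      funext x; exact Real.norm_of_nonneg (hgnn x)
    rw [this]
    exact hbound T hT
  have hIci : IntegrableOn g (Set.Ici t₀) := by
    rwa [integrableOn_Ici_iff_integrableOn_Ioi]
  -- integral bound
  have hintle : (∫ τ in Set.Ici t₀, g τ) ≤ V t₀ := by
    rw [integral_Ici_eq_integral_Ioi]
    have htend : Filter.Tendsto (fun T : ℝ => ∫ τ in t₀..T, g τ) Filter.atTop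
        (nhds (∫ τ in Set.Ioi t₀, g τ)) :=
      intervalIntegral_tendsto_integral_Ioi t₀ hIoi Filter.tendsto_id
    refine le_of_tendsto htend ?_
    filter_upwards [Filter.eventually_ge_atTop t₀] with T hT
    exact hbound T hT
  -- coercivity of Q
  have hcoer : ∃ c : ℝ, 0 < c ∧ ∀ v : EuclideanSpace ℝ (Fin d), c * ‖v‖ ^ 2 ≤ ⟪v, Q v⟫ := by
    by_cases hnt : ∃ v : EuclideanSpace ℝ (Fin d), v ≠ 0
    · obtain ⟨v₀, hv₀⟩ := hnt
      have : Nontrivial (EuclideanSpace ℝ (Fin d)) := nontrivial_of_ne v₀ 0 hv₀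
      have hsne : (Metric.sphere (0 : EuclideanSpace ℝ (Fin d)) 1).Nonempty :=
        NormedSpace.sphere_nonempty.2 zero_le_one
      have hcont : Continuous fun v : EuclideanSpace ℝ (Fin d) => ⟪v, Q v⟫ :=
        continuous_id.inner Q.continuous
      obtain ⟨w, hw, hwmin⟩ := (isCompact_sphere (0 : EuclideanSpace ℝ (Fin d)) 1).exists_isMinOn
        hsne hcont.continuousOn
      have hwnorm : ‖w‖ = 1 := by simpa using hw
      have hwne : w ≠ 0 := by
        intro h; rw [h] at hwnorm; simp at hwnorm
      refine ⟨⟪w, Q w⟫, hQpos w hwne, ?_⟩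
      intro v
      rcases eq_or_ne v 0 with rfl | hv
      · simp
      · have hvn : (0:ℝ) < ‖v‖ := norm_pos_iff.2 hv
        set u : EuclideanSpace ℝ (Fin d) := ‖v‖⁻¹ • v with hu
        have hun : ‖u‖ = 1 := by
          rw [hu, norm_smul]; simp [abs_of_pos hvn, inv_mul_cancel₀ hvn.ne']
        have humem : u ∈ Metric.sphere (0 : EuclideanSpace ℝ (Fin d)) 1 := by
          simpa using hun
        have hle : ⟪w, Q w⟫ ≤ ⟪u, Q u⟫ := isMinOn_iff.mp hwmin u humem
        have hQu : ⟪u, Q u⟫ = (‖v‖ ^ 2)⁻¹ * ⟪v, Q v⟫ := by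
          rw [hu, _root_.map_smul, real_inner_smul_left, real_inner_smul_right, pow_two, mul_inv]
          ring
        have : ⟪w, Q w⟫ ≤ (‖v‖ ^ 2)⁻¹ * ⟪v, Q v⟫ := by
          rw [← hQu]; exact hle
        have h2 : ⟪w, Q w⟫ * ‖v‖ ^ 2 ≤ ⟪v, Q v⟫ := by
          have hv2 : (0:ℝ) < ‖v‖ ^ 2 := by positivity
          calc ⟪w, Q w⟫ * ‖v‖ ^ 2 ≤ ((‖v‖ ^ 2)⁻¹ * ⟪v, Q v⟫) * ‖v‖ ^ 2 := by
                exact mul_le_mul_of_nonneg_right this hv2.le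
            _ = ⟪v, Q v⟫ := by field_simp
        linarith
    · push_neg at hnt
      refine ⟨1, one_pos, ?_⟩
      intro v
      rw [hnt v]; simp
  obtain ⟨c, hc, hcle⟩ := hcoer
  -- L² bound
  have hL2 : IntegrableOn (fun τ => ‖xe τ‖ ^ 2) (Set.Ici t₀) := by
    have hmaj : IntegrableOn (fun τ => c⁻¹ * g τ) (Set.Ici t₀) := hIci.const_mul _
    apply Integrable.mono' hmaj
    · exact ((hxeC.norm.pow 2).aestronglyMeasurable).restrict
    · filter_upwards with τ
      rw [Real.norm_of_nonneg (by positivity)]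
      have hle := hcle (xe τ)
      calc ‖xe τ‖ ^ 2 = c⁻¹ * (c * ‖xe τ‖ ^ 2) := by field_simp
        _ ≤ c⁻¹ * g τ := mul_le_mul_of_nonneg_left hle (inv_nonneg.2 hc.le)
  exact ⟨hanti, hIci, hintle, hL2⟩
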